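/- Let (z_n) be a sequence in a Banach space Z and C ≥ 1 a constant such that for every s ∈ ℕ and every s ≤ k_1 < k_2 < ⋯ < k_s, ‖z_{k_1} + z_{k_2} + ⋯ + z_{k_s}‖ ≤ C. Then (z_n) converges weakly to 0. -/

import Mathlib

lemma stmt6_aux {Z : Type*} [NormedAddCommGroup Z] [NormedSpace ℝ Z]
    (z : ℕ → Z) (C : ℝ)
    (h : ∀ F : Finset ℕ, (∀ k ∈ F, F.card ≤ k) → ‖∑ k ∈ F, z k‖ ≤ C)
    (f : Z →L[ℝ] ℝ) (ε : ℝ) (hε : 0 < ε)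
    (T : Set ℕ) (hT : T.Infinite) (hTf : ∀ n ∈ T, ε ≤ f (z n)) : False := by
  obtain ⟨s, hs⟩ := exists_nat_gt (‖f‖ * C / ε)
  obtain ⟨F, hF, hcard⟩ := (hT.diff (Set.finite_Iio s)).exists_subset_card_eq s
  have hmem : ∀ k ∈ F, s ≤ k ∧ ε ≤ f (z k) := by
    intro k hk
    have hk' : k ∈ T \ Set.Iio s := hF hk
    exact ⟨not_lt.1 hk'.2, hTf k hk'.1⟩
  have hsum : (s : ℝ) * ε ≤ f (∑ k ∈ F, z k) := by
    rw [map_sum]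
    calc (s : ℝ) * ε = ∑ _k ∈ F, ε := by rw [Finset.sum_const, hcard, nsmul_eq_mul]
    _ ≤ ∑ k ∈ F, f (z k) := Finset.sum_le_sum fun k hk => (hmem k hk).2
  have hb : f (∑ k ∈ F, z k) ≤ ‖f‖ * C := by
    have h1 : f (∑ k ∈ F, z k) ≤ ‖f‖ * ‖∑ k ∈ F, z k‖ :=
      le_trans (le_abs_self _) (f.le_opNorm _)
    have h2 : ‖∑ k ∈ F, z k‖ ≤ C := h F fun k hk => hcard ▸ (hmem k hk).1
    exact le_trans h1 (mul_le_mul_of_nonneg_left h2 (norm_nonneg f))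
  have : ‖f‖ * C < s * ε := (div_lt_iff₀ hε).1 hs
  linarith

theorem stmt6 {Z : Type*} [NormedAddCommGroup Z] [NormedSpace ℝ Z] [CompleteSpace Z]
    (z : ℕ → Z) (C : ℝ) (hC : 1 ≤ C)
    (h : ∀ F : Finset ℕ, (∀ k ∈ F, F.card ≤ k) → ‖∑ k ∈ F, z k‖ ≤ C) :
    ∀ f : Z →L[ℝ] ℝ, Filter.Tendsto (fun n => f (z n)) Filter.atTop (nhds 0) := by
  intro f
  by_contra hcon
  rw [Metric.tendsto_atTop] at hcon
  push_neg at hcon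
  obtain ⟨ε, hε, hfreq⟩ := hcon
  have hinf : {n | ε ≤ |f (z n)|}.Infinite := by
    apply Set.infinite_of_not_bddAbove
    rintro ⟨M, hM⟩
    obtain ⟨n, hn, hn'⟩ := hfreq (M + 1)
    have : n ≤ M := hM (by simpa [Real.dist_eq] using hn')
    omega
  have hsub : {n | ε ≤ |f (z n)|} ⊆ {n | ε ≤ f (z n)} ∪ {n | ε ≤ (-f) (z n)} := by
    intro n hn
    rcases abs_cases (f (z n)) with ⟨he, _⟩ | ⟨he, _⟩
    · left
      have hn' : ε ≤ |f (z n)| := hn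
      simp only [Set.mem_setOf_eq]; linarith
    · right; simp only [Set.mem_setOf_eq, ContinuousLinearMap.neg_apply]
      have hn' : ε ≤ |f (z n)| := hn
      linarith
  rcases Set.infinite_union.1 (hinf.mono hsub) with h1 | h1
  · exact stmt6_aux z C h f ε hε _ h1 fun n hn => hn
  · exact stmt6_aux z C h (-f) ε hε _ h1 fun n hn => hn
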